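/- arXiv:0711.1371 — 2 statements merged into one kernel-verified Lean document; each statement's English description precedes it below -/
import Mathlib

section
/- Let 0 < ε < 2, λ ∈ ℂ, and let v ∈ l²({1,2,3,...}) satisfy (ε/2)·n(n-1)·v_{n-1} − (ε/2)·n(n+1)·v_{n+1} + n·v_n = λ·v_n for all n ≥ 1 (with v_0 := 0). Define the generating function u(z) := Σ_{k=1}^∞ v_k z^k for |z| < 1. Then u is analytic on the open unit disc and satisfies z(1−z)(1+z)·u''(z) − 2z(z + 1/ε)·u'(z) + (2λ/ε)·u(z) = 0 for all |z| < 1. -/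
open Metric Filter

private lemma summable_cube_geom {r : ℝ} (hr0 : 0 ≤ r) (hr : r < 1) :
    Summable (fun n : ℕ => ((n : ℝ) + 1) ^ 3 * r ^ n) := by
  have h : ‖r‖ < 1 := by rwa [Real.norm_eq_abs, abs_of_nonneg hr0]
  have h3 := summable_pow_mul_geometric_of_norm_lt_one (R := ℝ) 3 h
  have h2 := summable_pow_mul_geometric_of_norm_lt_one (R := ℝ) 2 h
  have h1 := summable_pow_mul_geometric_of_norm_lt_one (R := ℝ) 1 h
  have h0 := summable_pow_mul_geometric_of_norm_lt_one (R := ℝ) 0 h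
  refine ((h3.add (h2.mul_left 3)).add ((h1.mul_left 3).add h0)).congr fun n => ?_
  ring

private lemma summable_coeff {a : ℕ → ℂ} {C : ℝ} (hC : ∀ k, ‖a k‖ ≤ C * ((k : ℝ) + 1) ^ 2)
    {z : ℂ} (hz : ‖z‖ < 1) : Summable (fun k : ℕ => a k * z ^ k) := by
  have hC0 : 0 ≤ C := le_trans (norm_nonneg (a 0)) (by have := hC 0; norm_num at this; exact this)
  apply Summable.of_norm_bounded
    ((summable_cube_geom (norm_nonneg z) hz).mul_left C)
  intro k
  rw [norm_mul, norm_pow]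
  have hk1 : (1 : ℝ) ≤ (k : ℝ) + 1 := by
    have := Nat.cast_nonneg (α := ℝ) k; linarith
  calc ‖a k‖ * ‖z‖ ^ k ≤ (C * ((k : ℝ) + 1) ^ 2) * ‖z‖ ^ k := by
        gcongr; exact hC k
    _ ≤ C * (((k : ℝ) + 1) ^ 3 * ‖z‖ ^ k) := by
        rw [← mul_assoc]
        gcongr <;> first | exact hk1 | omega

private lemma key_deriv {a : ℕ → ℂ} {C : ℝ} (hC : ∀ k, ‖a k‖ ≤ C * ((k : ℝ) + 1) ^ 2)
    {z : ℂ} (hz : ‖z‖ < 1) :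
    HasDerivAt (fun w : ℂ => ∑' k : ℕ, a k * w ^ k)
      (∑' k : ℕ, ((k : ℂ) + 1) * a (k + 1) * z ^ k) z := by
  have hC0 : 0 ≤ C := le_trans (norm_nonneg (a 0)) (by have := hC 0; norm_num at this; exact this)
  set r : ℝ := (‖z‖ + 1) / 2 with hrdef
  have hzr : ‖z‖ < r := by simp only [hrdef]; linarith
  have hr1 : r < 1 := by simp only [hrdef]; linarith
  have hr0 : 0 < r := lt_of_le_of_lt (norm_nonneg z) hzr
  have hzt : z ∈ ball (0 : ℂ) r := mem_ball_zero_iff.mpr hzr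
  have h0t : (0 : ℂ) ∈ ball (0 : ℂ) r := mem_ball_self hr0
  set bnd : ℕ → ℝ := fun n => (C / r) * (((n : ℝ) + 1) ^ 3 * r ^ n) with hbnd
  have hbsum : Summable bnd := (summable_cube_geom hr0.le hr1).mul_left (C / r)
  have hg : ∀ (n : ℕ) (y : ℂ), y ∈ ball (0 : ℂ) r →
      HasDerivAt (fun w : ℂ => a n * w ^ n) (a n * ((n : ℂ) * y ^ (n - 1))) y :=
    fun n y _ => (hasDerivAt_pow n y).const_mul (a n)
  have hg' : ∀ (n : ℕ) (y : ℂ), y ∈ ball (0 : ℂ) r →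
      ‖a n * ((n : ℂ) * y ^ (n - 1))‖ ≤ bnd n := by
    intro n y hy
    have hyr : ‖y‖ ≤ r := (mem_ball_zero_iff.mp hy).le
    rcases n with _ | m
    · simp only [Nat.cast_zero, zero_mul, mul_zero, norm_zero, hbnd]
      positivity
    · have hyp : ‖y‖ ^ m ≤ r ^ m := pow_le_pow_left₀ (norm_nonneg y) hyr m
      have hcast : ‖((m + 1 : ℕ) : ℂ)‖ = (m : ℝ) + 1 := by
        rw [Complex.norm_natCast]; push_cast; ring
      calc ‖a (m + 1) * (((m + 1 : ℕ) : ℂ) * y ^ (m + 1 - 1))‖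
          = ‖a (m + 1)‖ * (((m : ℝ) + 1) * ‖y‖ ^ m) := by
            rw [norm_mul, norm_mul, norm_pow, hcast]
            norm_num
        _ ≤ (C * (((m : ℝ) + 1) + 1) ^ 2) * ((((m : ℝ) + 1) + 1) * r ^ m) := by
            gcongr
            · have := hC (m + 1); push_cast at this; linarith
            · linarith
        _ = (C / r) * ((((m : ℝ) + 1) + 1) ^ 3 * r ^ (m + 1)) := by
            field_simp
            ring
        _ = bnd (m + 1) := by simp only [hbnd]; push_cast; ring_nf
  have hg0 : Summable fun n : ℕ => a n * (0 : ℂ) ^ n := by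
    apply summable_of_ne_finset_zero (s := {0})
    intro b hb
    simp only [Finset.mem_singleton] at hb
    rw [zero_pow hb, mul_zero]
  have hder := hasDerivAt_tsum_of_isPreconnected hbsum isOpen_ball
    (convex_ball (0 : ℂ) r).isPreconnected hg hg' h0t hg0 hzt
  have hsum' : Summable (fun n : ℕ => a n * ((n : ℂ) * z ^ (n - 1))) :=
    Summable.of_norm_bounded hbsum (fun n => hg' n z hzt)
  have hval : (∑' n : ℕ, a n * ((n : ℂ) * z ^ (n - 1)))
      = ∑' k : ℕ, ((k : ℂ) + 1) * a (k + 1) * z ^ k := by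
    rw [Summable.tsum_eq_zero_add hsum']
    simp only [Nat.cast_zero, zero_mul, mul_zero, zero_add]
    exact tsum_congr fun k => by push_cast; ring
  rw [← hval]
  exact hder

private lemma hasSum_shift1 {F : ℕ → ℂ} {S : ℂ} (h : HasSum (fun n => F (n + 1)) S)
    (h0 : F 0 = 0) : HasSum F S := by
  have := (hasSum_nat_add_iff (f := F) 1).mp h
  simpa [h0] using this

private lemma hasSum_shift2 {F : ℕ → ℂ} {S : ℂ} (h : HasSum (fun n => F (n + 2)) S)
    (h0 : F 0 = 0) (h1 : F 1 = 0) : HasSum F S := by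
  have := (hasSum_nat_add_iff (f := F) 2).mp h
  simpa [h0, h1, Finset.sum_range_succ] using this

private lemma hasSum_congr' {f g : ℕ → ℂ} {S : ℂ} (h : HasSum f S) (he : ∀ n, g n = f n) :
    HasSum g S := by
  rw [funext he]; exact h

/-- The generating function `u(z) = Σ_{k≥1} vₖ zᵏ` of an eigenvector of `A₊`
is analytic on the open unit disc and satisfies
`z(1−z)(1+z)u'' − 2z(z+1/ε)u' + (2λ/ε)u = 0` there. -/
theorem generating_function_ODE (ε : ℝ) (hε0 : 0 < ε) (hε2 : ε < 2) (lam : ℂ) (v : ℕ → ℂ)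
    (hv0 : v 0 = 0) (hl2 : Memℓp v 2)
    (heig : ∀ n : ℕ, 1 ≤ n →
      (ε : ℂ) / 2 * n * (n - 1) * v (n - 1) - (ε : ℂ) / 2 * n * (n + 1) * v (n + 1)
        + n * v n = lam * v n)
    (u : ℂ → ℂ) (hu : ∀ z : ℂ, ‖z‖ < 1 → u z = ∑' k : ℕ, v k * z ^ k) :
    AnalyticOnNhd ℂ u (Metric.ball (0 : ℂ) 1) ∧
    ∀ z : ℂ, ‖z‖ < 1 →
      z * (1 - z) * (1 + z) * iteratedDeriv 2 u z - 2 * z * (z + 1 / (ε : ℂ)) * deriv u z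
        + (2 * lam / (ε : ℂ)) * u z = 0 := by
  have hεne : (ε : ℂ) ≠ 0 := by
    simp only [ne_eq, Complex.ofReal_eq_zero]; exact ne_of_gt hε0
  -- boundedness of coefficients
  obtain ⟨C, hCb⟩ : ∃ C : ℝ, ∀ k, ‖v k‖ ≤ C := by
    obtain ⟨C, hC⟩ := (hl2.of_exponent_ge (le_top : (2 : ENNReal) ≤ ⊤)).bddAbove
    exact ⟨C, fun k => hC ⟨k, rfl⟩⟩
  have hCnn : 0 ≤ C := le_trans (norm_nonneg (v 0)) (hCb 0)
  set a₁ : ℕ → ℂ := fun k => ((k : ℂ) + 1) * v (k + 1) with ha₁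
  set a₂ : ℕ → ℂ := fun k => ((k : ℂ) + 1) * a₁ (k + 1) with ha₂
  have hC0 : ∀ k, ‖v k‖ ≤ C * ((k : ℝ) + 1) ^ 2 := by
    intro k
    have hk1 : (1 : ℝ) ≤ ((k : ℝ) + 1) ^ 2 := by nlinarith [Nat.cast_nonneg (α := ℝ) k]
    calc ‖v k‖ ≤ C := hCb k
      _ = C * 1 := by ring
      _ ≤ C * ((k : ℝ) + 1) ^ 2 := by gcongr
  have hC1 : ∀ k, ‖a₁ k‖ ≤ C * ((k : ℝ) + 1) ^ 2 := by
    intro k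
    have : ‖a₁ k‖ = ((k : ℝ) + 1) * ‖v (k + 1)‖ := by
      rw [ha₁]
      simp only [norm_mul]
      congr 1
      have : ((k : ℂ) + 1) = ((k + 1 : ℕ) : ℂ) := by push_cast; ring
      rw [this, Complex.norm_natCast]; push_cast; ring
    rw [this]
    have hk0 : (0 : ℝ) ≤ (k : ℝ) := Nat.cast_nonneg k
    have e1 : ((k : ℝ) + 1) * ‖v (k + 1)‖ ≤ ((k : ℝ) + 1) * C :=
      mul_le_mul_of_nonneg_left (hCb (k + 1)) (by linarith)
    nlinarith [mul_nonneg (mul_nonneg hCnn hk0) (show (0 : ℝ) ≤ (k : ℝ) + 1 by linarith)]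
  have hC2 : ∀ k, ‖a₂ k‖ ≤ (2 * C) * ((k : ℝ) + 1) ^ 2 := by
    intro k
    have h1 : ‖a₂ k‖ = ((k : ℝ) + 1) * ‖a₁ (k + 1)‖ := by
      rw [ha₂]
      simp only [norm_mul]
      congr 1
      have : ((k : ℂ) + 1) = ((k + 1 : ℕ) : ℂ) := by push_cast; ring
      rw [this, Complex.norm_natCast]; push_cast; ring
    have h2 : ‖a₁ (k + 1)‖ = ((k : ℝ) + 2) * ‖v (k + 2)‖ := by
      rw [ha₁]
      simp only [norm_mul]
      congr 1
      have : (((k + 1 : ℕ) : ℂ) + 1) = ((k + 2 : ℕ) : ℂ) := by push_cast; ring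
      rw [this, Complex.norm_natCast]; push_cast; ring
    rw [h1, h2]
    have hk0 : (0 : ℝ) ≤ (k : ℝ) := Nat.cast_nonneg k
    have e1 : ((k : ℝ) + 1) * (((k : ℝ) + 2) * ‖v (k + 2)‖)
        ≤ ((k : ℝ) + 1) * (((k : ℝ) + 2) * C) := by
      apply mul_le_mul_of_nonneg_left _ (by linarith)
      exact mul_le_mul_of_nonneg_left (hCb (k + 2)) (by linarith)
    nlinarith [mul_nonneg (mul_nonneg hCnn hk0) (show (0 : ℝ) ≤ (k : ℝ) + 1 by linarith)]
  set S1 : ℂ → ℂ := fun z => ∑' k : ℕ, a₁ k * z ^ k with hS1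
  set S2 : ℂ → ℂ := fun z => ∑' k : ℕ, a₂ k * z ^ k with hS2
  -- derivative facts
  have hud : ∀ z ∈ Metric.ball (0 : ℂ) 1, HasDerivAt u (S1 z) z := by
    intro z hzb
    have hz : ‖z‖ < 1 := mem_ball_zero_iff.mp hzb
    have h := key_deriv hC0 hz
    have hev : u =ᶠ[nhds z] (fun w : ℂ => ∑' k : ℕ, v k * w ^ k) :=
      Filter.eventually_of_mem (Metric.isOpen_ball.mem_nhds hzb)
        (fun w hw => hu w (mem_ball_zero_iff.mp hw))
    exact (h.congr_of_eventuallyEq hev)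
  have hS1d : ∀ z ∈ Metric.ball (0 : ℂ) 1, HasDerivAt S1 (S2 z) z := by
    intro z hzb
    exact key_deriv hC1 (mem_ball_zero_iff.mp hzb)
  have hderiv_eq : ∀ z ∈ Metric.ball (0 : ℂ) 1, deriv u z = S1 z :=
    fun z hzb => (hud z hzb).deriv
  constructor
  · exact DifferentiableOn.analyticOnNhd
      (fun z hzb => (hud z hzb).differentiableAt.differentiableWithinAt) Metric.isOpen_ball
  intro z hz
  have hzb : z ∈ Metric.ball (0 : ℂ) 1 := mem_ball_zero_iff.mpr hz
  have h2eq : iteratedDeriv 2 u z = S2 z := by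
    rw [show (2 : ℕ) = 1 + 1 from rfl, iteratedDeriv_succ, iteratedDeriv_one]
    have hev : deriv u =ᶠ[nhds z] S1 :=
      Filter.eventually_of_mem (Metric.isOpen_ball.mem_nhds hzb)
        (fun w hw => hderiv_eq w hw)
    rw [hev.deriv_eq]
    exact (hS1d z hzb).deriv
  -- HasSum facts
  have hU : HasSum (fun k : ℕ => v k * z ^ k) (u z) := by
    rw [hu z hz]; exact (summable_coeff hC0 hz).hasSum
  have hS1sum : HasSum (fun k : ℕ => a₁ k * z ^ k) (S1 z) := (summable_coeff hC1 hz).hasSum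
  have hS2sum : HasSum (fun k : ℕ => a₂ k * z ^ k) (S2 z) := (summable_coeff hC2 hz).hasSum
  -- shifted sums
  have hD1 : HasSum (fun m : ℕ => (m : ℂ) * v m * z ^ m) (z * S1 z) := by
    apply hasSum_shift1 ?_ (by simp)
    apply hasSum_congr' (hS1sum.mul_left z)
    intro n
    rw [ha₁]
    push_cast
    ring
  have hD2 : HasSum (fun m : ℕ => ((m - 1 : ℕ) : ℂ) * v (m - 1) * z ^ m) (z * (z * S1 z)) := by
    apply hasSum_shift1 ?_ (by simp [hv0])
    apply hasSum_congr' (hD1.mul_left z)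
    intro n
    simp only [Nat.add_sub_cancel]
    push_cast
    ring
  have hH1 : HasSum (fun m : ℕ => (m : ℂ) * ((m : ℂ) + 1) * v (m + 1) * z ^ m) (z * S2 z) := by
    apply hasSum_shift1 ?_ (by simp)
    apply hasSum_congr' (hS2sum.mul_left z)
    intro n
    rw [ha₂, ha₁]
    push_cast
    ring
  have hH3 : HasSum (fun m : ℕ => ((m - 2 : ℕ) : ℂ) * ((m - 1 : ℕ) : ℂ) * v (m - 1) * z ^ m)
      (z ^ 2 * (z * S2 z)) := by
    apply hasSum_shift2 ?_ (by simp) (by simp [hv0])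
    apply hasSum_congr' (hH1.mul_left (z ^ 2))
    intro n
    simp only [Nat.add_sub_cancel, show ∀ n : ℕ, n + 2 - 1 = n + 1 from fun n => rfl]
    push_cast
    ring
  -- combine
  have Ecomb := (((hH1.sub hH3).sub (hD2.mul_left 2)).sub (hD1.mul_left (2 / (ε : ℂ)))).add
    (hU.mul_left (2 * lam / (ε : ℂ)))
  have hfun0 : (fun m : ℕ =>
      ((m : ℂ) * ((m : ℂ) + 1) * v (m + 1) * z ^ m
        - ((m - 2 : ℕ) : ℂ) * ((m - 1 : ℕ) : ℂ) * v (m - 1) * z ^ m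
        - 2 * (((m - 1 : ℕ) : ℂ) * v (m - 1) * z ^ m)
        - 2 / (ε : ℂ) * ((m : ℂ) * v m * z ^ m))
        + 2 * lam / (ε : ℂ) * (v m * z ^ m)) = fun _ => (0 : ℂ) := by
    funext m
    match m with
    | 0 => norm_num [hv0]
    | 1 =>
      have h1 := heig 1 le_rfl
      norm_num at h1 ⊢
      field_simp
      linear_combination (-2 : ℂ) * z * h1
    | (n + 2) =>
      have h := heig (n + 2) (by omega)
      simp only [show n + 2 - 1 = n + 1 from rfl, show n + 2 - 2 = n from rfl] at h ⊢
      push_cast at h ⊢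
      field_simp
      linear_combination (-2 : ℂ) * z ^ (n + 2) * h
  rw [hfun0] at Ecomb
  have hval0 := Ecomb.unique hasSum_zero
  rw [h2eq, hderiv_eq z hzb]
  linear_combination hval0
end

section
/- Let 0 < ε < 2, μ ∈ ℂ, and set p(x) = (1−x)^{1+1/ε}(1+x)^{1−1/ε} and w(x) = x^{−1}(1−x)^{1/ε}(1+x)^{−1/ε} for x ∈ (0, 1). Suppose u is analytic on an open set containing the real interval [0, 1], u(0) = 0, u is not identically zero on [0, 1], and −(p(x)u'(x))' = μ·w(x)·u(x) for all x ∈ (0, 1). Then μ ∈ ℝ. -/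
open Set Filter Complex Topology


/-- If `u` is analytic on an open set containing `[0,1]`, vanishes at `0`,
is not identically zero on `[0,1]`, and satisfies the Sturm–Liouville equation
`−(p u')' = μ w u` on `(0,1)` with `p(x) = (1−x)^(1+1/ε)(1+x)^(1−1/ε)` and
`w(x) = x⁻¹(1−x)^(1/ε)(1+x)^(−1/ε)`, then `μ` is real. -/
theorem sturm_liouville_real_eigenvalue (ε : ℝ) (hε0 : 0 < ε) (hε2 : ε < 2) (mu : ℂ)
    (p w : ℝ → ℝ)
    (hp : ∀ x : ℝ, p x = (1 - x) ^ (1 + 1 / ε) * (1 + x) ^ (1 - 1 / ε))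
    (hw : ∀ x : ℝ, w x = x⁻¹ * (1 - x) ^ (1 / ε) * (1 + x) ^ (-(1 / ε)))
    (V : Set ℂ) (hV : IsOpen V) (hIcc : (Complex.ofReal '' Set.Icc (0 : ℝ) 1) ⊆ V)
    (u : ℂ → ℂ) (hu : AnalyticOnNhd ℂ u V) (hu0 : u 0 = 0)
    (hune : ¬ ∀ x ∈ Set.Icc (0 : ℝ) 1, u x = 0)
    (hsl : ∀ x ∈ Set.Ioo (0 : ℝ) 1,
      -(deriv (fun t : ℝ => (p t : ℂ) * deriv (fun s : ℝ => u s) t) x)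
        = mu * (w x : ℂ) * u x) :
    mu.im = 0 := by
  by_contra him
  have hεinv : (0:ℝ) < 1 / ε := by positivity
  -- basic membership
  have hmem : ∀ x ∈ Set.Icc (0:ℝ) 1, (↑x : ℂ) ∈ V := fun x hx => hIcc ⟨x, hx, rfl⟩
  have hu' : AnalyticOnNhd ℂ (deriv u) V := hu.deriv
  set U : ℝ → ℂ := fun s : ℝ => u s with hUdef
  have hUd : ∀ x : ℝ, (↑x : ℂ) ∈ V → HasDerivAt U (deriv u ↑x) x := fun x hx =>
    ((hu _ hx).differentiableAt.hasDerivAt).comp_ofReal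
  have hderivU : ∀ x : ℝ, (↑x : ℂ) ∈ V → deriv U x = deriv u ↑x := fun x hx =>
    (hUd x hx).deriv
  have hVx : ∀ x ∈ Set.Icc (0:ℝ) 1, ∀ᶠ t : ℝ in 𝓝 x, (↑t : ℂ) ∈ V := fun x hx =>
    Complex.continuous_ofReal.continuousAt.preimage_mem_nhds (hV.mem_nhds (hmem x hx))
  -- positivity of w on Ioo
  have hwpos : ∀ x ∈ Set.Ioo (0:ℝ) 1, 0 < w x := by
    intro x hx
    rw [hw]
    have h1 : (0:ℝ) < 1 - x := by linarith [hx.2]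
    have h2 : (0:ℝ) < 1 + x := by linarith [hx.1]
    have := hx.1
    positivity
  -- differentiability of p on Ioo
  have hpdiff : ∀ x ∈ Set.Ioo (0:ℝ) 1, DifferentiableAt ℝ p x := by
    intro x hx
    have h1 : (1:ℝ) - x ≠ 0 := by nlinarith [hx.2]
    have h2 : (1:ℝ) + x ≠ 0 := by nlinarith [hx.1]
    have d1 : DifferentiableAt ℝ (fun y : ℝ => (1 - y) ^ (1 + 1/ε)) x :=
      (Real.differentiableAt_rpow_const_of_ne _ h1).comp x
        ((differentiableAt_const (1:ℝ)).sub differentiableAt_id)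
    have d2 : DifferentiableAt ℝ (fun y : ℝ => (1 + y) ^ (1 - 1/ε)) x :=
      (Real.differentiableAt_rpow_const_of_ne _ h2).comp x
        ((differentiableAt_const (1:ℝ)).add differentiableAt_id)
    exact (d1.mul d2).congr_of_eventuallyEq (Filter.Eventually.of_forall fun y => hp y)
  -- continuity of p on Icc
  have hpcontAt : ∀ x ∈ Set.Icc (0:ℝ) 1, ContinuousAt p x := by
    intro x hx
    have c1 : ContinuousAt (fun y : ℝ => (1 - y) ^ (1 + 1/ε)) x :=
      (Real.continuousAt_rpow_const _ _ (Or.inr (by positivity))).comp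
        ((continuous_const.sub continuous_id).continuousAt)
    have c2 : ContinuousAt (fun y : ℝ => (1 + y) ^ (1 - 1/ε)) x :=
      (Real.continuousAt_rpow_const _ _ (Or.inl (by nlinarith [hx.1]))).comp
        ((continuous_const.add continuous_id).continuousAt)
    exact ((c1.mul c2).congr
      (Filter.Eventually.of_forall fun y => (hp y).symm))
  -- the quantity H
  set G : ℝ → ℂ := fun t => (starRingEnd ℂ) (U t) * ((p t : ℂ) * deriv U t) with hGdef
  set H : ℝ → ℝ := fun t => -mu.im * (G t).im with hHdef
  -- the key derivative computation
  have key : ∀ x ∈ Set.Ioo (0:ℝ) 1,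
      HasDerivAt H (mu.im ^ 2 * (w x * Complex.normSq (u ↑x))) x := by
    intro x hx
    have hxI : x ∈ Set.Icc (0:ℝ) 1 := Set.mem_Icc_of_Ioo hx
    have hxV : (↑x : ℂ) ∈ V := hmem x hxI
    have heq : (fun t : ℝ => (p t : ℂ) * deriv U t)
        =ᶠ[𝓝 x] (fun t : ℝ => (p t : ℂ) * deriv u ↑t) := by
      filter_upwards [hVx x hxI] with t ht
      rw [hderivU t ht]
    have hud2 : HasDerivAt (fun t : ℝ => deriv u ↑t) (deriv (deriv u) ↑x) x :=
      ((hu' _ hxV).differentiableAt.hasDerivAt).comp_ofReal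
    have hQt : HasDerivAt (fun t : ℝ => (p t : ℂ) * deriv u ↑t)
        ((Complex.ofReal (deriv p x)) * deriv u ↑x + (p x : ℂ) * deriv (deriv u) ↑x) x :=
      ((hpdiff x hx).hasDerivAt.ofReal_comp).mul hud2
    have hQ : HasDerivAt (fun t : ℝ => (p t : ℂ) * deriv U t)
        ((Complex.ofReal (deriv p x)) * deriv u ↑x + (p x : ℂ) * deriv (deriv u) ↑x) x :=
      hQt.congr_of_eventuallyEq heq
    have hq : (Complex.ofReal (deriv p x)) * deriv u ↑x + (p x : ℂ) * deriv (deriv u) ↑x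
        = -(mu * (w x : ℂ) * u ↑x) := by
      rw [← hQ.deriv]
      exact neg_eq_iff_eq_neg.mp (hsl x hx)
    rw [hq] at hQ
    have hconj : HasDerivAt (fun t => (starRingEnd ℂ) (U t))
        ((starRingEnd ℂ) (deriv u ↑x)) x := (hUd x hxV).star
    have hG' : HasDerivAt G
        ((starRingEnd ℂ) (deriv u ↑x) * ((p x : ℂ) * deriv U x)
          + (starRingEnd ℂ) (U x) * -(mu * (w x : ℂ) * u ↑x)) x := hconj.mul hQ
    have hGim : HasDerivAt (fun t => (G t).im)
        ((starRingEnd ℂ) (deriv u ↑x) * ((p x : ℂ) * deriv U x)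
          + (starRingEnd ℂ) (U x) * -(mu * (w x : ℂ) * u ↑x)).im x :=
      Complex.imCLM.hasFDerivAt.comp_hasDerivAt x hG'
    have hH : HasDerivAt H (-mu.im *
        ((starRingEnd ℂ) (deriv u ↑x) * ((p x : ℂ) * deriv U x)
          + (starRingEnd ℂ) (U x) * -(mu * (w x : ℂ) * u ↑x)).im) x :=
      hGim.const_mul _
    convert hH using 1
    rw [hderivU x hxV]
    simp only [hUdef]
    simp [Complex.mul_im, Complex.mul_re, Complex.normSq_apply, Complex.conj_re,
      Complex.conj_im, Complex.neg_re, Complex.neg_im, Complex.ofReal_re, Complex.ofReal_im]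
    ring
  -- continuity of H on Icc
  have hHcont : ContinuousOn H (Set.Icc (0:ℝ) 1) := by
    intro x hx
    have hcU : ContinuousAt U x :=
      ((hu _ (hmem x hx)).continuousAt).comp Complex.continuous_ofReal.continuousAt
    have hcU' : ContinuousAt (deriv U) x := by
      have : ContinuousAt (fun t : ℝ => deriv u ↑t) x :=
        ((hu' _ (hmem x hx)).continuousAt).comp Complex.continuous_ofReal.continuousAt
      apply this.congr
      filter_upwards [hVx x hx] with t ht
      exact (hderivU t ht).symm
    have hcG : ContinuousAt G x :=
      (Complex.continuous_conj.continuousAt.comp hcU).mul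
        ((Complex.continuous_ofReal.continuousAt.comp (hpcontAt x hx)).mul hcU')
    exact ((continuousAt_const.mul (Complex.continuous_im.continuousAt.comp hcG)).continuousWithinAt)
  -- H is monotone on Icc
  have hmono : MonotoneOn H (Set.Icc (0:ℝ) 1) := by
    apply monotoneOn_of_deriv_nonneg (convex_Icc 0 1) hHcont
    · rw [interior_Icc]
      intro x hx
      exact (key x hx).differentiableAt.differentiableWithinAt
    · rw [interior_Icc]
      intro x hx
      rw [(key x hx).deriv]
      exact mul_nonneg (sq_nonneg _)
        (mul_nonneg (hwpos x hx).le (Complex.normSq_nonneg _))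
  -- endpoint values
  have hH0 : H 0 = 0 := by
    simp [hHdef, hGdef, hUdef, hu0]
  have hH1 : H 1 = 0 := by
    have hp1 : p 1 = 0 := by
      rw [hp]
      rw [show (1:ℝ) - 1 = 0 by ring, Real.zero_rpow (by positivity)]
      ring
    simp [hHdef, hGdef, hp1]
  have hHzero : ∀ x ∈ Set.Icc (0:ℝ) 1, H x = 0 := by
    intro x hx
    have h1 := hmono (Set.left_mem_Icc.mpr one_pos.le) hx hx.1
    have h2 := hmono hx (Set.right_mem_Icc.mpr one_pos.le) hx.2
    rw [hH0] at h1; rw [hH1] at h2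
    linarith
  -- u vanishes on Ioo
  have huIoo : ∀ x ∈ Set.Ioo (0:ℝ) 1, u ↑x = 0 := by
    intro x hx
    have hloc : H =ᶠ[𝓝 x] fun _ => (0:ℝ) := by
      filter_upwards [isOpen_Ioo.mem_nhds hx] with t ht
      exact hHzero t (Set.mem_Icc_of_Ioo ht)
    have hd0 : HasDerivAt (fun _ : ℝ => (0:ℝ))
        (mu.im ^ 2 * (w x * Complex.normSq (u ↑x))) x :=
      (key x hx).congr_of_eventuallyEq hloc.symm
    have : mu.im ^ 2 * (w x * Complex.normSq (u ↑x)) = 0 :=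
      (hd0.unique (hasDerivAt_const x 0))
    have hn : Complex.normSq (u ↑x) = 0 := by
      by_contra hne
      have hpos : 0 < Complex.normSq (u ↑x) :=
        lt_of_le_of_ne (Complex.normSq_nonneg _) (Ne.symm hne)
      have h1 : 0 < mu.im ^ 2 := by positivity
      have h2 : 0 < mu.im ^ 2 * (w x * Complex.normSq (u ↑x)) :=
        mul_pos h1 (mul_pos (hwpos x hx) hpos)
      linarith
    exact Complex.normSq_eq_zero.mp hn
  -- u vanishes on Icc
  apply hune
  intro x hx
  rcases eq_or_lt_of_le hx.2 with h1 | h1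
  · -- x = 1 : take limits
    subst h1
    have hcU : ContinuousAt U 1 :=
      ((hu _ (hmem 1 (Set.right_mem_Icc.mpr one_pos.le))).continuousAt).comp
        Complex.continuous_ofReal.continuousAt
    have hne : (𝓝[Set.Ioo (0:ℝ) 1] (1:ℝ)).NeBot := by
      rw [← mem_closure_iff_nhdsWithin_neBot, closure_Ioo (by norm_num : (0:ℝ) ≠ 1)]
      exact Set.right_mem_Icc.mpr one_pos.le
    have t1 : Filter.Tendsto U (𝓝[Set.Ioo (0:ℝ) 1] (1:ℝ)) (𝓝 (U 1)) :=
      (hcU.tendsto).mono_left nhdsWithin_le_nhds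
    have t2 : Filter.Tendsto U (𝓝[Set.Ioo (0:ℝ) 1] (1:ℝ)) (𝓝 0) := by
      apply Filter.Tendsto.congr' _ tendsto_const_nhds
      filter_upwards [self_mem_nhdsWithin] with t ht
      exact (huIoo t ht).symm
    exact tendsto_nhds_unique t1 t2
  rcases eq_or_lt_of_le hx.1 with h0 | h0
  · rw [← h0]; simpa using hu0
  · exact huIoo x ⟨h0, h1⟩
end
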